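/- Let Ω ⊂ ℝⁿ be open and bounded, ε > 0, and u ∈ C²(Ω) ∩ C⁰(closure Ω) with u continuous up to the boundary, u = -1 and ∂_ν u = 0 on ∂Ω (or u extended by -1 outside Ω in W²,²_loc). Suppose {u > 1} has finite perimeter in Ω. Then (1/ε)∫_{{u>1}} (ε Δu - (1/ε) W'(u))² dx ≥ ∫_{{u>1}} ε (Δu)² + (4/ε)|∇u|² + (1/ε³)(W'(u))² dx, where W(u) = (u²-1)²/4. -/

import Mathlib

open MeasureTheory

/-- The Laplacian of a function on `ℝⁿ`, as the trace of the second derivative. -/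
noncomputable def lap {n : ℕ} (u : EuclideanSpace ℝ (Fin n) → ℝ)
    (x : EuclideanSpace ℝ (Fin n)) : ℝ :=
  ∑ i : Fin n,
    fderiv ℝ (fun y => fderiv ℝ u y (EuclideanSpace.single i (1 : ℝ))) x
      (EuclideanSpace.single i (1 : ℝ))

section Aux
open Filter Asymptotics


lemma coord_le_norm {n : ℕ} (x : EuclideanSpace ℝ (Fin n)) (i : Fin n) : |x i| ≤ ‖x‖ := by
  rw [EuclideanSpace.norm_eq, ← Real.sqrt_sq_eq_abs]
  apply Real.sqrt_le_sqrt
  calc x i ^ 2 = ‖x i‖ ^ 2 := by rw [Real.norm_eq_abs, sq_abs]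
  _ ≤ ∑ j, ‖x j‖ ^ 2 := Finset.single_le_sum (f := fun j => ‖x j‖^2) (fun j _ => by positivity) (Finset.mem_univ i)

instance eucOrder {n : ℕ} : PartialOrder (EuclideanSpace ℝ (Fin n)) :=
  PartialOrder.lift (fun x : EuclideanSpace ℝ (Fin n) => x.ofLp) (WithLp.ofLp_injective 2)

lemma euclid_divergence {m : ℕ}
    (f : Fin (m+1) → EuclideanSpace ℝ (Fin (m+1)) → ℝ)
    (f' : Fin (m+1) → EuclideanSpace ℝ (Fin (m+1)) → EuclideanSpace ℝ (Fin (m+1)) →L[ℝ] ℝ)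
    (hd : ∀ x i, HasFDerivAt (f i) (f' i x) x)
    (K : Set (EuclideanSpace ℝ (Fin (m+1)))) (hK : Bornology.IsBounded K)
    (hf0 : ∀ x ∉ K, ∀ i, f i x = 0)
    (hdiv0 : ∀ x ∉ K, ∑ i, f' i x (EuclideanSpace.single i 1) = 0)
    (Hi : Integrable (fun x => ∑ i, f' i x (EuclideanSpace.single i 1))) :
    ∫ x, (∑ i, f' i x (EuclideanSpace.single i 1)) = 0 := by
  obtain ⟨R, hR0, hKR⟩ := hK.subset_ball_lt 0 0
  set eL := EuclideanSpace.equiv (Fin (m+1)) ℝ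
  set a : EuclideanSpace ℝ (Fin (m+1)) := eL.symm (fun _ => -R) with ha
  set b : EuclideanSpace ℝ (Fin (m+1)) := eL.symm (fun _ => R) with hb
  have hab : a ≤ b := fun i => by
    show -R ≤ R; linarith
  have hKIcc : K ⊆ Set.Icc a b := by
    intro x hx
    have hxR := hKR hx
    rw [Metric.mem_ball, dist_zero_right] at hxR
    constructor <;> intro i <;>
      [(show -R ≤ x i); (show x i ≤ R)] <;>
      have := coord_le_norm x i <;> cases abs_le.1 (this.trans hxR.le) <;> linarith
  have key := integral_divergence_of_hasFDerivAt_off_countable_of_equiv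
    (eL : EuclideanSpace ℝ (Fin (m+1)) ≃L[ℝ] (Fin (m+1) → ℝ))
    (fun x y => Iff.rfl) (EuclideanSpace.volume_preserving_symm_measurableEquiv_toLp (Fin (m+1)))
    f f' ∅ Set.countable_empty a b hab
    (fun i => fun x _ => (hd x i).continuousAt.continuousWithinAt)
    (fun x hx i => hd x i)
    (fun x => ∑ i, f' i x (EuclideanSpace.single i 1)) (fun x => rfl)
    Hi.integrableOn
  have hfaces : ∀ (i : Fin (m+1)) (c : ℝ) (hc : |c| = R)
      (y : Fin m → ℝ), f i (eL.symm (i.insertNth c y)) = 0 := by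
    intro i c hc y
    apply hf0
    intro hmem
    have := (Metric.mem_ball.1 (hKR hmem))
    rw [dist_zero_right] at this
    have h2 := coord_le_norm (eL.symm (i.insertNth c y)) i
    have h3 : (eL.symm (i.insertNth c y)) i = c :=
      Fin.insertNth_apply_same (α := fun _ => ℝ) i c y
    rw [h3, hc] at h2
    linarith
  rw [← setIntegral_eq_integral_of_forall_compl_eq_zero
    (s := Set.Icc a b) (fun x hx => hdiv0 x (fun hK => hx (hKIcc hK)))]
  rw [key]
  apply Finset.sum_eq_zero
  intro i _
  have h1 : eL b i = R := rfl
  have h2 : eL a i = -R := rfl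
  rw [h1, h2]
  simp [hfaces i R (abs_of_pos hR0), hfaces i (-R) (by rw [abs_neg, abs_of_pos hR0])]


/-- Chain rule through the kink of `t ↦ max (t-1) 0`, assuming `q 0 = 0`, `q' 0 = 0`. -/
lemma hasDerivAt_comp_max {q q' : ℝ → ℝ} (hq00 : q 0 = 0) (hq'0 : q' 0 = 0)
    (hq0 : HasDerivAt q 0 0) (hq : ∀ s, 0 < s → HasDerivAt q (q' s) s) (t : ℝ) :
    HasDerivAt (fun t => q (max (t - 1) 0)) (q' (max (t - 1) 0)) t := by
  rcases lt_trichotomy t 1 with ht | rfl | ht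
  · have hmax : max (t - 1) 0 = 0 := max_eq_right (by linarith)
    rw [hmax, hq'0]
    apply (hasDerivAt_const t (q 0)).congr_of_eventuallyEq
    filter_upwards [eventually_lt_nhds ht] with y hy
    rw [max_eq_right (by linarith)]
  · have hmax : max (1 - 1 : ℝ) 0 = 0 := by norm_num
    rw [hmax, hq'0]
    rw [hasDerivAt_iff_isLittleO]
    have h0 : (fun s => q s) =o[nhds 0] (fun s => s) := by
      have := hasDerivAt_iff_isLittleO.1 hq0
      simpa [hq00] using this
    have htend : Tendsto (fun y : ℝ => max (y - 1) 0) (nhds 1) (nhds 0) := by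
      have : Continuous fun y : ℝ => max (y - 1) 0 := by continuity
      simpa using this.tendsto 1
    have h1 : (fun y : ℝ => q (max (y - 1) 0)) =o[nhds 1] (fun y => max (y - 1) 0) :=
      h0.comp_tendsto htend
    have h2 : (fun y : ℝ => max (y - 1) 0) =O[nhds 1] (fun y => y - 1) := by
      apply IsBigO.of_bound 1
      filter_upwards with y
      simp only [Real.norm_eq_abs, one_mul]
      calc |max (y - 1) 0| = |max (y - 1) 0 - max 0 0| := by norm_num
        _ ≤ |y - 1 - 0| := abs_max_sub_max_le_abs _ _ _
        _ = |y - 1| := by norm_num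
    simpa [hq00, hmax] using h1.trans_isBigO h2
  · have hm : max (t - 1) 0 = t - 1 := max_eq_left (by linarith)
    rw [hm]
    have key : HasDerivAt (fun y : ℝ => q (y - 1)) (q' (t - 1) * 1) t :=
      HasDerivAt.comp t (hq (t - 1) (by linarith)) ((hasDerivAt_id t).sub_const 1)
    rw [mul_one] at key
    apply key.congr_of_eventuallyEq
    filter_upwards [eventually_gt_nhds ht] with y hy
    rw [max_eq_left (by linarith)]


noncomputable def qf (k : ℕ) (s : ℝ) : ℝ :=
  s^3 + 3*s^2 + 2*((k:ℝ)+1)*s^2/(1+((k:ℝ)+1)*s)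

noncomputable def qf' (k : ℕ) (s : ℝ) : ℝ :=
  3*s^2 + 6*s + (4*((k:ℝ)+1)*s + 2*((k:ℝ)+1)^2*s^2)/(1+((k:ℝ)+1)*s)^2

lemma qf_zero (k : ℕ) : qf k 0 = 0 := by simp [qf]
lemma qf'_zero (k : ℕ) : qf' k 0 = 0 := by simp [qf']

lemma qf_hasDerivAt (k : ℕ) {s : ℝ} (hs : 0 ≤ s) : HasDerivAt (qf k) (qf' k s) s := by
  have hK : (0:ℝ) < (k:ℝ)+1 := by positivity
  have hD : (0:ℝ) < 1+((k:ℝ)+1)*s := by positivity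
  have h1 : HasDerivAt (fun s : ℝ => s^3 + 3*s^2 + 2*((k:ℝ)+1)*s^2/(1+((k:ℝ)+1)*s))
      ((3*s^2) + 3*(2*s) + ((2*((k:ℝ)+1)*(2*s)) * (1+((k:ℝ)+1)*s) - 2*((k:ℝ)+1)*s^2 * ((k:ℝ)+1))/(1+((k:ℝ)+1)*s)^2) s := by
    apply HasDerivAt.add
    · exact ((hasDerivAt_pow 3 s).add ((hasDerivAt_pow 2 s).const_mul 3)).congr_deriv (by ring)
    · have hnum : HasDerivAt (fun s : ℝ => 2*((k:ℝ)+1)*s^2) (2*((k:ℝ)+1)*(2*s)) s := by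
        simpa using (hasDerivAt_pow 2 s).const_mul (2*((k:ℝ)+1))
      have hden : HasDerivAt (fun s : ℝ => 1+((k:ℝ)+1)*s) ((k:ℝ)+1) s := by
        simpa using ((hasDerivAt_id s).const_mul ((k:ℝ)+1)).const_add 1
      simpa using hnum.fun_div hden hD.ne'
  have : HasDerivAt (qf k) _ s := h1
  apply this.congr_deriv
  rw [qf']
  field_simp
  ring

lemma qf_nonneg (k : ℕ) {s : ℝ} (hs : 0 ≤ s) : 0 ≤ qf k s := by
  have hK : (0:ℝ) < (k:ℝ)+1 := by positivity
  have hD : (0:ℝ) < 1+((k:ℝ)+1)*s := by positivity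
  rw [qf]; positivity

lemma qf_le (k : ℕ) {s : ℝ} (hs : 0 ≤ s) : qf k s ≤ s^3 + 3*s^2 + 2*s := by
  have hK : (0:ℝ) < (k:ℝ)+1 := by positivity
  have hD : (0:ℝ) < 1+((k:ℝ)+1)*s := by positivity
  rw [qf]
  have : 2*((k:ℝ)+1)*s^2/(1+((k:ℝ)+1)*s) ≤ 2*s := by
    rw [div_le_iff₀ hD]; nlinarith
  linarith

lemma qf'_nonneg (k : ℕ) {s : ℝ} (hs : 0 ≤ s) : 0 ≤ qf' k s := by
  have hK : (0:ℝ) < (k:ℝ)+1 := by positivity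
  have hD : (0:ℝ) < 1+((k:ℝ)+1)*s := by positivity
  rw [qf']; positivity

lemma qf'_le (k : ℕ) {s : ℝ} (hs : 0 ≤ s) : qf' k s ≤ 3*s^2 + 6*s + 2 := by
  have hK : (0:ℝ) < (k:ℝ)+1 := by positivity
  have hD : (0:ℝ) < 1+((k:ℝ)+1)*s := by positivity
  rw [qf']
  have : (4*((k:ℝ)+1)*s + 2*((k:ℝ)+1)^2*s^2)/(1+((k:ℝ)+1)*s)^2 ≤ 2 := by
    rw [div_le_iff₀ (by positivity)]; nlinarith
  linarith

lemma tendsto_denom (m : ℝ) (hm : 0 < m) :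
    Tendsto (fun k : ℕ => 1+((k:ℝ)+1)*m) atTop atTop := by
  have h1 : Tendsto (fun k : ℕ => ((k:ℝ)+1)*m) atTop atTop :=
    Tendsto.atTop_mul_const hm (tendsto_atTop_add_const_right atTop 1 tendsto_natCast_atTop_atTop)
  exact tendsto_atTop_add_const_left atTop 1 h1

lemma qf_tendsto {t : ℝ} (ht : 1 < t) :
    Tendsto (fun k : ℕ => qf k (max (t-1) 0)) atTop (nhds (t^3 - t)) := by
  have hm : 0 < t - 1 := by linarith
  have hmax : max (t-1) 0 = t - 1 := max_eq_left hm.le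
  have heq : ∀ k : ℕ, qf k (max (t-1) 0) = (t^3 - t) - 2*(t-1)/(1+((k:ℝ)+1)*(t-1)) := by
    intro k
    have hK : (0:ℝ) < (k:ℝ)+1 := by positivity
    have hD : (0:ℝ) < 1+((k:ℝ)+1)*(t-1) := by positivity
    rw [hmax, qf]
    field_simp
    ring
  simp only [heq]
  have h2 : Tendsto (fun k : ℕ => 2*(t-1)/(1+((k:ℝ)+1)*(t-1))) atTop (nhds 0) := by
    simpa [div_eq_mul_inv] using ((tendsto_denom (t-1) hm).inv_tendsto_atTop).const_mul (2*(t-1))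
  simpa using tendsto_const_nhds.sub h2

lemma qf'_tendsto {t : ℝ} (ht : 1 < t) :
    Tendsto (fun k : ℕ => qf' k (max (t-1) 0)) atTop (nhds (3*t^2 - 1)) := by
  have hm : 0 < t - 1 := by linarith
  have hmax : max (t-1) 0 = t - 1 := max_eq_left hm.le
  have heq : ∀ k : ℕ, qf' k (max (t-1) 0) = (3*t^2 - 1) - 2/(1+((k:ℝ)+1)*(t-1))^2 := by
    intro k
    have hK : (0:ℝ) < (k:ℝ)+1 := by positivity
    have hD : (0:ℝ) < 1+((k:ℝ)+1)*(t-1) := by positivity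
    rw [hmax, qf']
    field_simp
    ring
  simp only [heq]
  have h2 : Tendsto (fun k : ℕ => 2/(1+((k:ℝ)+1)*(t-1))^2) atTop (nhds 0) := by
    have := (((tendsto_denom (t-1) hm).atTop_mul_atTop₀ (tendsto_denom (t-1) hm)).inv_tendsto_atTop).const_mul 2
    simpa [pow_two, div_eq_mul_inv, mul_inv, mul_comm, mul_assoc, mul_left_comm] using this
  simpa using tendsto_const_nhds.sub h2

lemma div_identity {n : ℕ} (Ω : Set (EuclideanSpace ℝ (Fin n))) (hΩ : IsOpen Ω)
    (hΩb : Bornology.IsBounded Ω)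
    (u : EuclideanSpace ℝ (Fin n) → ℝ)
    (hu_cont : Continuous u) (hu_sm : ContDiffOn ℝ 2 u Ω)
    (hu_out : ∀ x ∉ Ω, u x = -1)
    (g g' : ℝ → ℝ) (hgd : ∀ t, HasDerivAt g (g' t) t)
    (hg'c : Continuous g')
    (hg0 : ∀ t ≤ 1, g t = 0) (hg'0 : ∀ t ≤ 1, g' t = 0) :
    ∫ x in {x | 1 < u x},
      (g' (u x) * (∑ i, (fderiv ℝ u x (EuclideanSpace.single i (1:ℝ)))^2)
        + g (u x) * lap u x) = 0 := by
  cases n with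
  | zero =>
      have h0 : ∀ x, (g' (u x) * (∑ i : Fin 0, (fderiv ℝ u x (EuclideanSpace.single i (1:ℝ)))^2)
          + g (u x) * lap u x) = 0 := by
        intro x
        simp [lap]
      simp only [h0, integral_zero]
  | succ m =>
      have hgc : Continuous g := Differentiable.continuous fun t => (hgd t).differentiableAt
      -- the compact set K
      set K : Set (EuclideanSpace ℝ (Fin (m+1))) := {x | 1 ≤ u x} with hKdef
      have hKcl : IsClosed K := isClosed_le continuous_const hu_cont
      have hKΩ : K ⊆ Ω := by
        intro x hx
        by_contra hxΩ
        have := hu_out x hxΩ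
        have : (1:ℝ) ≤ -1 := by rw [← this]; exact hx
        linarith
      have hKb : Bornology.IsBounded K := hΩb.subset hKΩ
      have hKcomp : IsCompact K := Metric.isCompact_of_isClosed_isBounded hKcl hKb
      -- derivative data
      have hu_diff : ∀ x ∈ Ω, DifferentiableAt ℝ u x := fun x hx =>
        (hu_sm.contDiffAt (hΩ.mem_nhds hx)).differentiableAt (by norm_num)
      have hDu1 : ContDiffOn ℝ 1 (fderiv ℝ u) Ω := hu_sm.fderiv_of_isOpen hΩ (by norm_num)
      have hDuA : ∀ i : Fin (m+1), ContDiffOn ℝ 1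
          (fun y => fderiv ℝ u y (EuclideanSpace.single i (1:ℝ))) Ω := fun i =>
        (ContinuousLinearMap.apply ℝ ℝ (EuclideanSpace.single i (1:ℝ))).contDiff.comp_contDiffOn hDu1
      have hDuA_diff : ∀ (i : Fin (m+1)), ∀ x ∈ Ω,
          DifferentiableAt ℝ (fun y => fderiv ℝ u y (EuclideanSpace.single i (1:ℝ))) x :=
        fun i x hx => ((hDuA i).contDiffAt (hΩ.mem_nhds hx)).differentiableAt (by norm_num)
      -- the vector field
      set f : Fin (m+1) → EuclideanSpace ℝ (Fin (m+1)) → ℝ :=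
        fun i x => g (u x) * fderiv ℝ u x (EuclideanSpace.single i (1:ℝ)) with hf
      set f' : Fin (m+1) → EuclideanSpace ℝ (Fin (m+1)) → EuclideanSpace ℝ (Fin (m+1)) →L[ℝ] ℝ := fun i x =>
        g (u x) • (fderiv ℝ (fun y => fderiv ℝ u y (EuclideanSpace.single i (1:ℝ))) x)
          + (fderiv ℝ u x (EuclideanSpace.single i (1:ℝ))) • (g' (u x) • fderiv ℝ u x) with hf'
      -- the divergence rewrites as the integrand
      have hdiv : ∀ x, (∑ i, f' i x (EuclideanSpace.single i (1:ℝ)))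
          = g' (u x) * (∑ i, (fderiv ℝ u x (EuclideanSpace.single i (1:ℝ)))^2)
            + g (u x) * lap u x := by
        intro x
        unfold lap
        rw [hf']
        simp only [ContinuousLinearMap.add_apply, ContinuousLinearMap.smul_apply, smul_eq_mul]
        rw [Finset.sum_add_distrib, Finset.mul_sum, Finset.mul_sum]
        rw [add_comm]
        congr 1
        apply Finset.sum_congr rfl
        intro i _
        ring
      -- differentiability everywhere
      have hhasF : ∀ (x : EuclideanSpace ℝ (Fin (m+1))) (i : Fin (m+1)), HasFDerivAt (f i) (f' i x) x := by
        intro x i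
        by_cases hx : x ∈ Ω
        · have h1 : HasFDerivAt (fun y => g (u y)) (g' (u x) • fderiv ℝ u x) x :=
            (hgd (u x)).comp_hasFDerivAt x (hu_diff x hx).hasFDerivAt
          have h2 : HasFDerivAt (fun y => fderiv ℝ u y (EuclideanSpace.single i (1:ℝ)))
              (fderiv ℝ (fun y => fderiv ℝ u y (EuclideanSpace.single i (1:ℝ))) x) x :=
            (hDuA_diff i x hx).hasFDerivAt
          have := h1.mul h2
          rw [hf', hf]
          exact this
        · have hu1 : u x < 1 := by rw [hu_out x hx]; norm_num
          have hV : {y | u y < 1} ∈ nhds x :=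
            (isOpen_lt hu_cont continuous_const).mem_nhds hu1
          have hev : f i =ᶠ[nhds x] (fun _ => (0:ℝ)) := by
            filter_upwards [hV] with y hy
            rw [hf]
            simp [hg0 _ hy.le]
          have h0 : HasFDerivAt (f i) (0 : EuclideanSpace ℝ (Fin (m+1)) →L[ℝ] ℝ) x :=
            (hasFDerivAt_const (0:ℝ) x).congr_of_eventuallyEq hev
          have hf'0 : f' i x = 0 := by
            rw [hf']
            simp [hg0 _ hu1.le, hg'0 _ hu1.le]
          rw [hf'0]
          exact h0
      -- vanishing outside K
      have hf0 : ∀ x ∉ K, ∀ i, f i x = 0 := by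
        intro x hx i
        have hu1 : u x < 1 := by simpa [hKdef] using hx
        rw [hf]; simp [hg0 _ hu1.le]
      have hdiv0 : ∀ x ∉ K, (∑ i, f' i x (EuclideanSpace.single i (1:ℝ))) = 0 := by
        intro x hx
        have hu1 : u x < 1 := by simpa [hKdef] using hx
        rw [hdiv x]
        simp [hg0 _ hu1.le, hg'0 _ hu1.le]
      -- integrability of the divergence
      have hmeas : Measurable (fun x => ∑ i, f' i x (EuclideanSpace.single i (1:ℝ))) := by
        have : (fun x => ∑ i, f' i x (EuclideanSpace.single i (1:ℝ)))
            = fun x => g' (u x) * (∑ i, (fderiv ℝ u x (EuclideanSpace.single i (1:ℝ)))^2)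
              + g (u x) * lap u x := funext hdiv
        rw [this]
        apply Measurable.add
        · apply Measurable.mul
          · exact hg'c.measurable.comp hu_cont.measurable
          · apply Finset.measurable_sum
            intro i _
            exact ((measurable_fderiv_apply_const ℝ u (EuclideanSpace.single i (1:ℝ)))).pow_const 2
        · apply Measurable.mul
          · exact hgc.measurable.comp hu_cont.measurable
          · unfold lap
            apply Finset.measurable_sum
            intro i _
            exact measurable_fderiv_apply_const ℝ _ (EuclideanSpace.single i (1:ℝ))
      have hcontOn : ContinuousOn (fun x => ∑ i, f' i x (EuclideanSpace.single i (1:ℝ))) Ω := by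
        have : ∀ i : Fin (m+1), ContinuousOn
            (fun x => f' i x (EuclideanSpace.single i (1:ℝ))) Ω := by
          intro i
          rw [hf']
          simp only [ContinuousLinearMap.add_apply, ContinuousLinearMap.smul_apply, smul_eq_mul]
          apply ContinuousOn.add
          · apply ContinuousOn.mul
            · exact hgc.comp_continuousOn hu_cont.continuousOn
            · have h2 : ContDiffOn ℝ 0 (fderiv ℝ
                  (fun y => fderiv ℝ u y (EuclideanSpace.single i (1:ℝ)))) Ω :=
                (hDuA i).fderiv_of_isOpen hΩ (by norm_num)
              exact (ContinuousLinearMap.apply ℝ ℝ (EuclideanSpace.single i (1:ℝ))).continuous.comp_continuousOn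
                h2.continuousOn
          · apply ContinuousOn.mul
            · exact (hDuA i).continuousOn
            · exact ContinuousOn.mul (hg'c.comp_continuousOn hu_cont.continuousOn) (hDuA i).continuousOn
        exact continuousOn_finset_sum _ fun i _ => this i
      obtain ⟨C, hC⟩ := hKcomp.exists_bound_of_continuousOn (hcontOn.mono hKΩ)
      have hKmeas : MeasurableSet K := hKcl.measurableSet
      have Hi : Integrable (fun x => ∑ i, f' i x (EuclideanSpace.single i (1:ℝ))) := by
        have heq : (fun x => ∑ i, f' i x (EuclideanSpace.single i (1:ℝ)))
            = K.indicator (fun x => ∑ i, f' i x (EuclideanSpace.single i (1:ℝ))) := by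
          funext x
          by_cases hx : x ∈ K
          · rw [Set.indicator_of_mem hx]
          · rw [Set.indicator_of_notMem hx, hdiv0 x hx]
        rw [heq, integrable_indicator_iff hKmeas]
        apply Measure.integrableOn_of_bounded (M := C) hKcomp.measure_lt_top.ne
          hmeas.aestronglyMeasurable
        rw [ae_restrict_iff' hKmeas]
        filter_upwards with x hx
        exact hC x hx
      -- apply the divergence theorem
      have hint : ∫ x, (∑ i, f' i x (EuclideanSpace.single i (1:ℝ))) = 0 :=
        euclid_divergence f f' hhasF K hKb hf0 hdiv0 Hi
      -- restrict to {u > 1}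
      have hS0 : ∀ x ∉ {x : EuclideanSpace ℝ (Fin (m+1)) | 1 < u x},
          g' (u x) * (∑ i, (fderiv ℝ u x (EuclideanSpace.single i (1:ℝ)))^2)
            + g (u x) * lap u x = 0 := by
        intro x hx
        have hu1 : u x ≤ 1 := not_lt.1 hx
        simp [hg0 _ hu1, hg'0 _ hu1]
      rw [setIntegral_eq_integral_of_forall_compl_eq_zero hS0]
      rw [← funext hdiv] at *
      rw [← hint]


lemma opNorm_sq_le_sum_sq {n : ℕ} (l : EuclideanSpace ℝ (Fin n) →L[ℝ] ℝ) :
    ‖l‖^2 ≤ ∑ i, (l (EuclideanSpace.single i (1:ℝ)))^2 := by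
  set w : EuclideanSpace ℝ (Fin n) :=
    (EuclideanSpace.equiv (Fin n) ℝ).symm (fun i => l (EuclideanSpace.single i (1:ℝ))) with hw
  have hwi : ∀ i, w i = l (EuclideanSpace.single i (1:ℝ)) := fun i => rfl
  have hlv : ∀ v : EuclideanSpace ℝ (Fin n), l v = inner ℝ w v := by
    intro v
    have hv : (∑ i, v i • EuclideanSpace.single i (1:ℝ)) = v := by
      have h1 := (EuclideanSpace.basisFun (Fin n) ℝ).sum_repr v
      simpa [EuclideanSpace.basisFun_apply, EuclideanSpace.basisFun_repr] using h1
    conv_lhs => rw [← hv]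
    rw [map_sum]
    rw [PiLp.inner_apply]
    apply Finset.sum_congr rfl
    intro i _
    simp [hwi i, RCLike.inner_apply, mul_comm]
  have hnorm : ‖l‖ ≤ ‖w‖ := by
    apply ContinuousLinearMap.opNorm_le_bound _ (norm_nonneg w)
    intro v
    rw [hlv v, Real.norm_eq_abs]
    exact abs_real_inner_le_norm w v
  have hw2 : ‖w‖^2 = ∑ i, (l (EuclideanSpace.single i (1:ℝ)))^2 := by
    rw [EuclideanSpace.norm_eq, Real.sq_sqrt (by positivity)]
    apply Finset.sum_congr rfl
    intro i _
    rw [hwi i, Real.norm_eq_abs, sq_abs]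
  calc ‖l‖^2 ≤ ‖w‖^2 := by nlinarith [norm_nonneg l, norm_nonneg w]
  _ = _ := hw2

end Aux

set_option maxHeartbeats 1000000


/-- For `u ∈ C²(Ω) ∩ C⁰` extended by `-1` outside the open bounded set `Ω`,
if `{u > 1}` has finite perimeter (its boundary has finite `H^{n-1}`-measure),
then with `W(u) = (u²-1)²/4` (so `W'(u) = u³ - u`):
`(1/ε)∫_{{u>1}} (εΔu − (1/ε)W'(u))² ≥ ∫_{{u>1}} ε(Δu)² + (4/ε)|∇u|² + (1/ε³)W'(u)²`. -/
theorem diffuse_energy_exterior_estimate {n : ℕ}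
    (Ω : Set (EuclideanSpace ℝ (Fin n))) (hΩ : IsOpen Ω)
    (hΩb : Bornology.IsBounded Ω) (ε : ℝ) (hε : 0 < ε)
    (u : EuclideanSpace ℝ (Fin n) → ℝ)
    (hu_cont : Continuous u) (hu_sm : ContDiffOn ℝ 2 u Ω)
    (hu_out : ∀ x ∉ Ω, u x = -1)
    (hperim : μH[(n : ℝ) - 1] (frontier {x | 1 < u x}) < ⊤) :
    (∫ x in {x | 1 < u x},
        ε * (lap u x) ^ 2 + (4 / ε) * ‖fderiv ℝ u x‖ ^ 2
          + (1 / ε ^ 3) * ((u x) ^ 3 - u x) ^ 2)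
      ≤ (1 / ε) * ∫ x in {x | 1 < u x},
          (ε * lap u x - (1 / ε) * ((u x) ^ 3 - u x)) ^ 2 := by
  classical
  set S : Set (EuclideanSpace ℝ (Fin n)) := {x | 1 < u x} with hSdef
  set K : Set (EuclideanSpace ℝ (Fin n)) := {x | 1 ≤ u x} with hKdef
  set Q : EuclideanSpace ℝ (Fin n) → ℝ :=
    fun x => ∑ i, (fderiv ℝ u x (EuclideanSpace.single i (1:ℝ)))^2 with hQdef
  -- basic facts
  have hKcl : IsClosed K := isClosed_le continuous_const hu_cont
  have hKΩ : K ⊆ Ω := by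
    intro x hx
    by_contra hxΩ
    have h1 := hu_out x hxΩ
    have h2 : (1:ℝ) ≤ -1 := by rw [← h1]; exact hx
    linarith
  have hKb : Bornology.IsBounded K := hΩb.subset hKΩ
  have hKcomp : IsCompact K := Metric.isCompact_of_isClosed_isBounded hKcl hKb
  have hSK : S ⊆ K := fun x hx => show (1:ℝ) ≤ u x from le_of_lt hx
  have hSmeas : MeasurableSet S := (isOpen_lt continuous_const hu_cont).measurableSet
  have hSlt : volume S < ⊤ := lt_of_le_of_lt (measure_mono hSK) hKcomp.measure_lt_top
  -- regularity of derivative data on Ω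
  have hDu1 : ContDiffOn ℝ 1 (fderiv ℝ u) Ω := hu_sm.fderiv_of_isOpen hΩ (by norm_num)
  have hDuA : ∀ i : Fin n, ContDiffOn ℝ 1
      (fun y => fderiv ℝ u y (EuclideanSpace.single i (1:ℝ))) Ω := fun i =>
    (ContinuousLinearMap.apply ℝ ℝ (EuclideanSpace.single i (1:ℝ))).contDiff.comp_contDiffOn hDu1
  have hQc : ContinuousOn Q Ω := by
    apply continuousOn_finset_sum
    intro i _
    exact ((hDuA i).continuousOn).pow 2
  have hLc : ContinuousOn (lap u) Ω := by
    unfold lap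
    apply continuousOn_finset_sum
    intro i _
    have h2 : ContDiffOn ℝ 0 (fderiv ℝ
        (fun y => fderiv ℝ u y (EuclideanSpace.single i (1:ℝ)))) Ω :=
      (hDuA i).fderiv_of_isOpen hΩ (by norm_num)
    exact (ContinuousLinearMap.apply ℝ ℝ (EuclideanSpace.single i (1:ℝ))).continuous.comp_continuousOn
      h2.continuousOn
  have hDnc : ContinuousOn (fun x => ‖fderiv ℝ u x‖) Ω := hDu1.continuousOn.norm
  -- measurability
  have mu : Measurable u := hu_cont.measurable
  have mQ : Measurable Q := by
    apply Finset.measurable_sum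
    intro i _
    exact (measurable_fderiv_apply_const ℝ u (EuclideanSpace.single i (1:ℝ))).pow_const 2
  have mL : Measurable (lap u) := by
    unfold lap
    apply Finset.measurable_sum
    intro i _
    exact measurable_fderiv_apply_const ℝ _ (EuclideanSpace.single i (1:ℝ))
  have mDn : Measurable (fun x => ‖fderiv ℝ u x‖) := (measurable_fderiv ℝ u).norm
  -- integrability helper
  have hIntOn : ∀ (h : EuclideanSpace ℝ (Fin n) → ℝ), Measurable h → ContinuousOn h Ω →
      IntegrableOn h S := by
    intro h mh ch
    obtain ⟨C, hC⟩ := hKcomp.exists_bound_of_continuousOn (ch.mono hKΩ)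
    apply Measure.integrableOn_of_bounded (M := C) hSlt.ne mh.aestronglyMeasurable
    rw [ae_restrict_iff' hSmeas]
    filter_upwards with x hx
    exact hC x (hSK hx)
  -- bounds on K
  obtain ⟨M', hM'⟩ := hKcomp.exists_bound_of_continuousOn hu_cont.continuousOn
  obtain ⟨CQ', hCQ'⟩ := hKcomp.exists_bound_of_continuousOn (hQc.mono hKΩ)
  obtain ⟨CL', hCL'⟩ := hKcomp.exists_bound_of_continuousOn (hLc.mono hKΩ)
  set M : ℝ := max M' 0 with hMdef
  set CQ : ℝ := max CQ' 0 with hCQdef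
  set CL : ℝ := max CL' 0 with hCLdef
  have hM : ∀ x ∈ K, |u x| ≤ M := fun x hx =>
    le_trans (hM' x hx) (le_max_left _ _)
  have hCQ : ∀ x ∈ K, |Q x| ≤ CQ := fun x hx => le_trans (hCQ' x hx) (le_max_left _ _)
  have hCL : ∀ x ∈ K, |lap u x| ≤ CL := fun x hx => le_trans (hCL' x hx) (le_max_left _ _)
  have hM0 : 0 ≤ M := le_max_right _ _
  have hCQ0 : 0 ≤ CQ := le_max_right _ _
  have hCL0 : 0 ≤ CL := le_max_right _ _
  -- the mollified vector field identities
  have hgd_k : ∀ (k : ℕ) (t : ℝ),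
      HasDerivAt (fun t => qf k (max (t-1) 0)) (qf' k (max (t-1) 0)) t := by
    intro k
    apply hasDerivAt_comp_max (qf_zero k) (qf'_zero k)
    · have := qf_hasDerivAt k (le_refl 0)
      rwa [qf'_zero] at this
    · exact fun s hs => qf_hasDerivAt k hs.le
  have hcont_q' : ∀ k : ℕ, Continuous (fun t => qf' k (max (t-1) 0)) := by
    intro k
    unfold qf'
    apply Continuous.add
    · fun_prop
    · apply Continuous.div (by fun_prop) (by fun_prop)
      intro t
      have h0 : (0:ℝ) ≤ max (t-1) 0 := le_max_right _ _
      positivity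
  have hcont_q : ∀ k : ℕ, Continuous (fun t => qf k (max (t-1) 0)) := by
    intro k
    unfold qf
    apply Continuous.add
    · fun_prop
    · apply Continuous.div (by fun_prop) (by fun_prop)
      intro t
      have h0 : (0:ℝ) ≤ max (t-1) 0 := le_max_right _ _
      positivity
  have hzero_q : ∀ (k : ℕ) (t : ℝ), t ≤ 1 → qf k (max (t-1) 0) = 0 := by
    intro k t ht
    rw [max_eq_right (by linarith), qf_zero]
  have hzero_q' : ∀ (k : ℕ) (t : ℝ), t ≤ 1 → qf' k (max (t-1) 0) = 0 := by
    intro k t ht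
    rw [max_eq_right (by linarith), qf'_zero]
  have hIk : ∀ k : ℕ, ∫ x in S, (qf' k (max (u x - 1) 0) * Q x
      + qf k (max (u x - 1) 0) * lap u x) = 0 := by
    intro k
    have := div_identity Ω hΩ hΩb u hu_cont hu_sm hu_out
      (fun t => qf k (max (t-1) 0)) (fun t => qf' k (max (t-1) 0))
      (hgd_k k) (hcont_q' k) (hzero_q k) (hzero_q' k)
    simpa using this
  -- dominated convergence
  set c : ℝ := (3*(M+1)^2+6*(M+1)+2)*CQ + ((M+1)^3+3*(M+1)^2+2*(M+1))*CL with hcdef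
  have hDCT := tendsto_integral_of_dominated_convergence
    (μ := volume.restrict S)
    (F := fun k x => qf' k (max (u x - 1) 0) * Q x + qf k (max (u x - 1) 0) * lap u x)
    (f := fun x => (3*(u x)^2 - 1) * Q x + ((u x)^3 - u x) * lap u x)
    (bound := fun _ => c)
    (fun k => (((hcont_q' k).comp hu_cont).measurable.mul mQ |>.add
      (((hcont_q k).comp hu_cont).measurable.mul mL)).aestronglyMeasurable)
    (integrableOn_const hSlt.ne)
    (by
      intro k
      rw [ae_restrict_iff' hSmeas]
      filter_upwards with x hx
      have hxK : x ∈ K := hSK hx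
      set s : ℝ := max (u x - 1) 0 with hs
      have hs0 : (0:ℝ) ≤ s := le_max_right _ _
      have hsM : s ≤ M + 1 := by
        apply max_le
        · have := hM x hxK
          have := abs_le.1 this
          linarith [this.2]
        · linarith
      have h1 : |qf' k s| ≤ 3*(M+1)^2+6*(M+1)+2 := by
        rw [abs_of_nonneg (qf'_nonneg k hs0)]
        calc qf' k s ≤ 3*s^2+6*s+2 := qf'_le k hs0
          _ ≤ 3*(M+1)^2+6*(M+1)+2 := by
              have h2 := pow_le_pow_left₀ hs0 hsM 2
              linarith
      have h2 : |qf k s| ≤ (M+1)^3+3*(M+1)^2+2*(M+1) := by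
        rw [abs_of_nonneg (qf_nonneg k hs0)]
        calc qf k s ≤ s^3+3*s^2+2*s := qf_le k hs0
          _ ≤ (M+1)^3+3*(M+1)^2+2*(M+1) := by
              have h2 := pow_le_pow_left₀ hs0 hsM 2
              have h3 := pow_le_pow_left₀ hs0 hsM 3
              linarith
      have hQb := hCQ x hxK
      have hLb := hCL x hxK
      calc ‖qf' k s * Q x + qf k s * lap u x‖
          ≤ |qf' k s * Q x| + |qf k s * lap u x| := abs_add_le _ _
        _ = |qf' k s| * |Q x| + |qf k s| * |lap u x| := by rw [abs_mul, abs_mul]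
        _ ≤ (3*(M+1)^2+6*(M+1)+2) * CQ + ((M+1)^3+3*(M+1)^2+2*(M+1)) * CL := by
            apply add_le_add
            · exact mul_le_mul h1 hQb (abs_nonneg _) (by nlinarith)
            · exact mul_le_mul h2 hLb (abs_nonneg _) (by nlinarith)
        _ = c := rfl)
    (by
      rw [ae_restrict_iff' hSmeas]
      filter_upwards with x hx
      have hx1 : 1 < u x := hx
      exact ((qf'_tendsto hx1).mul_const (Q x)).add ((qf_tendsto hx1).mul_const (lap u x)))
  simp only [hIk] at hDCT
  have key : ∫ x in S, ((3*(u x)^2 - 1) * Q x + ((u x)^3 - u x) * lap u x) = 0 :=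
    tendsto_nhds_unique hDCT tendsto_const_nhds
  -- split the key identity
  have hI1 : IntegrableOn (fun x => (3*(u x)^2 - 1) * Q x) S :=
    hIntOn _ (((mu.pow_const 2).const_mul 3 |>.sub measurable_const).mul mQ)
      (((continuousOn_const.mul ((hu_cont.pow 2).continuousOn)).sub continuousOn_const).mul hQc)
  have hI2 : IntegrableOn (fun x => ((u x)^3 - u x) * lap u x) S :=
    hIntOn _ (((mu.pow_const 3).sub mu).mul mL)
      ((((hu_cont.pow 3).sub hu_cont).continuousOn).mul hLc)
  rw [integral_add hI1 hI2] at key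
  -- integral comparisons
  have hQnn : ∀ x, 0 ≤ Q x := by
    intro x
    apply Finset.sum_nonneg
    intro i _
    positivity
  have hIQ : IntegrableOn Q S := hIntOn _ mQ hQc
  have hIDn2 : IntegrableOn (fun x => ‖fderiv ℝ u x‖^2) S :=
    hIntOn _ (mDn.pow_const 2) (hDnc.pow 2)
  have hcomp1 : ∫ x in S, ‖fderiv ℝ u x‖^2 ≤ ∫ x in S, Q x := by
    apply setIntegral_mono_on hIDn2 hIQ hSmeas
    intro x _
    exact opNorm_sq_le_sum_sq (fderiv ℝ u x)
  have hcomp2 : ∫ x in S, 2 * Q x ≤ ∫ x in S, (3*(u x)^2 - 1) * Q x := by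
    apply setIntegral_mono_on (Integrable.const_mul hIQ 2) hI1 hSmeas
    intro x hx
    have hx1 : 1 < u x := hx
    have h0 := hQnn x
    have h1 : 0 ≤ (3*(u x)^2 - 3) * Q x := mul_nonneg (by nlinarith) h0
    linarith
  have hcomp2' : 2 * ∫ x in S, Q x ≤ ∫ x in S, (3*(u x)^2 - 1) * Q x := by
    rwa [integral_const_mul] at hcomp2
  -- final algebra
  have hA : IntegrableOn (fun x => ε * (lap u x) ^ 2 + (4 / ε) * ‖fderiv ℝ u x‖ ^ 2
      + (1 / ε ^ 3) * ((u x) ^ 3 - u x) ^ 2) S := by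
    apply Integrable.add
    apply Integrable.add
    · exact hIntOn _ ((mL.pow_const 2).const_mul ε) (continuousOn_const.mul (hLc.pow 2))
    · exact hIntOn _ ((mDn.pow_const 2).const_mul (4/ε)) (continuousOn_const.mul (hDnc.pow 2))
    · exact hIntOn _ ((((mu.pow_const 3).sub mu).pow_const 2).const_mul (1/ε^3))
        (continuousOn_const.mul ((((hu_cont.pow 3).sub hu_cont).continuousOn).pow 2))
  have hB : IntegrableOn (fun x => (ε * lap u x - (1 / ε) * ((u x) ^ 3 - u x)) ^ 2) S := by
    exact hIntOn _ (((mL.const_mul ε).sub (((mu.pow_const 3).sub mu).const_mul (1/ε))).pow_const 2)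
      (((continuousOn_const.mul hLc).sub (continuousOn_const.mul (((hu_cont.pow 3).sub hu_cont).continuousOn))).pow 2)
  have hptwise : ∀ x, (1/ε) * (ε * lap u x - (1 / ε) * ((u x) ^ 3 - u x)) ^ 2
      - (ε * (lap u x) ^ 2 + (4 / ε) * ‖fderiv ℝ u x‖ ^ 2 + (1 / ε ^ 3) * ((u x) ^ 3 - u x) ^ 2)
      = (-(2/ε)) * (((u x)^3 - u x) * lap u x + 2 * ‖fderiv ℝ u x‖^2) := by
    intro x
    field_simp
    ring
  have hsum_int : IntegrableOn (fun x => ((u x)^3 - u x) * lap u x + 2 * ‖fderiv ℝ u x‖^2) S :=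
    Integrable.add hI2 (Integrable.const_mul hIDn2 2)
  have hsum_le : ∫ x in S, (((u x)^3 - u x) * lap u x + 2 * ‖fderiv ℝ u x‖^2) ≤ 0 := by
    rw [integral_add hI2 (Integrable.const_mul hIDn2 2), integral_const_mul]
    have hW : ∫ x in S, ((u x)^3 - u x) * lap u x = - ∫ x in S, (3*(u x)^2 - 1) * Q x := by
      linarith
    rw [hW]
    linarith
  have hdiff : 0 ≤ ∫ x in S, ((1/ε) * (ε * lap u x - (1 / ε) * ((u x) ^ 3 - u x)) ^ 2
      - (ε * (lap u x) ^ 2 + (4 / ε) * ‖fderiv ℝ u x‖ ^ 2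
        + (1 / ε ^ 3) * ((u x) ^ 3 - u x) ^ 2)) := by
    have : (fun x => (1/ε) * (ε * lap u x - (1 / ε) * ((u x) ^ 3 - u x)) ^ 2
        - (ε * (lap u x) ^ 2 + (4 / ε) * ‖fderiv ℝ u x‖ ^ 2
          + (1 / ε ^ 3) * ((u x) ^ 3 - u x) ^ 2))
        = fun x => (-(2/ε)) * (((u x)^3 - u x) * lap u x + 2 * ‖fderiv ℝ u x‖^2) :=
      funext hptwise
    rw [this, integral_const_mul]
    have h1 : -(2/ε) ≤ 0 := by
      have : 0 < 2/ε := by positivity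
      linarith
    nlinarith [hsum_le]
  rw [integral_sub (Integrable.const_mul hB (1/ε)) hA, integral_const_mul] at hdiff
  linarith
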